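/- Second-variation identity along a constrained family (the key identity in the proofs of Lemma 2.2(3) and Lemma 4.1): Let E be a real normed vector space, W, P1, P2 : E → ℝ twice continuously Fréchet differentiable, I ⊆ ℝ an open interval, b ∈ ℝ. Let f : I → E be twice differentiable and α, β : I → ℝ differentiable, such that for every ã ∈ I one has P1(f(ã)) = ã², P2(f(ã)) = b, and DW(f(ã)) = α(ã)·DP1(f(ã)) + β(ã)·DP2(f(ã)). Then for every ã ∈ I, writing φ := f'(ã), one has D²W(f(ã))(φ,φ) − α(ã)·D²P1(f(ã))(φ,φ) − β(ã)·D²P2(f(ã))(φ,φ) = 2ã·α'(ã). -/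

import Mathlib

/-- Second-variation identity along a constrained family (key identity in the proofs of
Lemma 2.2(3) and Lemma 4.1): with `φ = f'(ã)`,
`D²W(f(ã))(φ,φ) − α(ã)·D²P1(f(ã))(φ,φ) − β(ã)·D²P2(f(ã))(φ,φ) = 2ã·α'(ã)`. -/
theorem second_variation_identity_along_constrained_family
    {E : Type*} [NormedAddCommGroup E] [NormedSpace ℝ E]
    (W P1 P2 : E → ℝ)
    (hW : ContDiff ℝ 2 W) (hP1 : ContDiff ℝ 2 P1) (hP2 : ContDiff ℝ 2 P2)
    (I : Set ℝ) (hIopen : IsOpen I) (hIconn : I.OrdConnected) (b : ℝ)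
    (f f' f'' : ℝ → E) (α β α' β' : ℝ → ℝ)
    (hf : ∀ a ∈ I, HasDerivAt f (f' a) a)
    (hf' : ∀ a ∈ I, HasDerivAt f' (f'' a) a)
    (hα : ∀ a ∈ I, HasDerivAt α (α' a) a)
    (hβ : ∀ a ∈ I, HasDerivAt β (β' a) a)
    (hP1f : ∀ a ∈ I, P1 (f a) = a ^ 2)
    (hP2f : ∀ a ∈ I, P2 (f a) = b)
    (hEL : ∀ a ∈ I, fderiv ℝ W (f a)
        = α a • fderiv ℝ P1 (f a) + β a • fderiv ℝ P2 (f a)) :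
    ∀ a ∈ I,
      fderiv ℝ (fderiv ℝ W) (f a) (f' a) (f' a)
        - α a * (fderiv ℝ (fderiv ℝ P1) (f a) (f' a) (f' a))
        - β a * (fderiv ℝ (fderiv ℝ P2) (f a) (f' a) (f' a))
      = 2 * a * α' a := by
  intro a ha
  have hWd : Differentiable ℝ W := hW.differentiable two_ne_zero
  have hP1d : Differentiable ℝ P1 := hP1.differentiable two_ne_zero
  have hP2d : Differentiable ℝ P2 := hP2.differentiable two_ne_zero
  have hW2 : Differentiable ℝ (fderiv ℝ W) :=
    (hW.fderiv_right (m := 1) (by norm_num)).differentiable one_ne_zero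
  have hP12 : Differentiable ℝ (fderiv ℝ P1) :=
    (hP1.fderiv_right (m := 1) (by norm_num)).differentiable one_ne_zero
  have hP22 : Differentiable ℝ (fderiv ℝ P2) :=
    (hP2.fderiv_right (m := 1) (by norm_num)).differentiable one_ne_zero
  -- first-order consequences of constraints
  have key1 : ∀ y ∈ I, fderiv ℝ P1 (f y) (f' y) = 2 * y := by
    intro y hy
    have h1 : HasDerivAt (fun t => P1 (f t)) (fderiv ℝ P1 (f y) (f' y)) y :=
      (hP1d (f y)).hasFDerivAt.comp_hasDerivAt y (hf y hy)
    have h2 : HasDerivAt (fun t => P1 (f t)) (2 * y) y := by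
      have hp : HasDerivAt (fun t : ℝ => t ^ 2) (2 * y) y := by
        simpa using hasDerivAt_pow 2 y
      exact hp.congr_of_eventuallyEq
        (Filter.eventuallyEq_of_mem (hIopen.mem_nhds hy) hP1f)
    exact h1.unique h2
  have key2 : ∀ y ∈ I, fderiv ℝ P2 (f y) (f' y) = 0 := by
    intro y hy
    have h1 : HasDerivAt (fun t => P2 (f t)) (fderiv ℝ P2 (f y) (f' y)) y :=
      (hP2d (f y)).hasFDerivAt.comp_hasDerivAt y (hf y hy)
    have h2 : HasDerivAt (fun t => P2 (f t)) (0 : ℝ) y :=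
      (hasDerivAt_const y b).congr_of_eventuallyEq
        (Filter.eventuallyEq_of_mem (hIopen.mem_nhds hy) hP2f)
    exact h1.unique h2
  -- second-order: derivative of y ↦ D P (f y) (f' y)
  have hgW : HasDerivAt (fun y => fderiv ℝ W (f y) (f' y))
      (fderiv ℝ (fderiv ℝ W) (f a) (f' a) (f' a) + fderiv ℝ W (f a) (f'' a)) a :=
    ((hW2 (f a)).hasFDerivAt.comp_hasDerivAt a (hf a ha)).clm_apply (hf' a ha)
  have hg1 : HasDerivAt (fun y => fderiv ℝ P1 (f y) (f' y))
      (fderiv ℝ (fderiv ℝ P1) (f a) (f' a) (f' a) + fderiv ℝ P1 (f a) (f'' a)) a :=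
    ((hP12 (f a)).hasFDerivAt.comp_hasDerivAt a (hf a ha)).clm_apply (hf' a ha)
  have hg2 : HasDerivAt (fun y => fderiv ℝ P2 (f y) (f' y))
      (fderiv ℝ (fderiv ℝ P2) (f a) (f' a) (f' a) + fderiv ℝ P2 (f a) (f'' a)) a :=
    ((hP22 (f a)).hasFDerivAt.comp_hasDerivAt a (hf a ha)).clm_apply (hf' a ha)
  -- identify these derivatives using equality on the open set I
  have E1 : fderiv ℝ (fderiv ℝ P1) (f a) (f' a) (f' a) + fderiv ℝ P1 (f a) (f'' a) = 2 := by
    have h2 : HasDerivAt (fun y : ℝ => 2 * y) (2 : ℝ) a := by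
      simpa using (hasDerivAt_id a).const_mul (2 : ℝ)
    have h2' : HasDerivAt (fun y => fderiv ℝ P1 (f y) (f' y)) (2 : ℝ) a :=
      h2.congr_of_eventuallyEq
        (Filter.eventuallyEq_of_mem (hIopen.mem_nhds ha) key1)
    exact hg1.unique h2'
  have E2 : fderiv ℝ (fderiv ℝ P2) (f a) (f' a) (f' a) + fderiv ℝ P2 (f a) (f'' a) = 0 := by
    have h2' : HasDerivAt (fun y => fderiv ℝ P2 (f y) (f' y)) (0 : ℝ) a :=
      (hasDerivAt_const a (0 : ℝ)).congr_of_eventuallyEq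
        (Filter.eventuallyEq_of_mem (hIopen.mem_nhds ha) key2)
    exact hg2.unique h2'
  have EW : fderiv ℝ (fderiv ℝ W) (f a) (f' a) (f' a) + fderiv ℝ W (f a) (f'' a)
      = 2 * α a + 2 * a * α' a := by
    have heq : ∀ y ∈ I, fderiv ℝ W (f y) (f' y) = 2 * y * α y := by
      intro y hy
      rw [hEL y hy]
      simp [key1 y hy, key2 y hy]
      ring
    have h2 : HasDerivAt (fun y : ℝ => 2 * y * α y) (2 * α a + 2 * a * α' a) a := by
      have hc : HasDerivAt (fun y : ℝ => 2 * y) (2 : ℝ) a := by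
        simpa using (hasDerivAt_id a).const_mul (2 : ℝ)
      exact hc.mul (hα a ha)
    have h2' : HasDerivAt (fun y => fderiv ℝ W (f y) (f' y))
        (2 * α a + 2 * a * α' a) a :=
      h2.congr_of_eventuallyEq
        (Filter.eventuallyEq_of_mem (hIopen.mem_nhds ha) heq)
    exact hgW.unique h2'
  have hELa : fderiv ℝ W (f a) (f'' a)
      = α a * fderiv ℝ P1 (f a) (f'' a) + β a * fderiv ℝ P2 (f a) (f'' a) := by
    rw [hEL a ha]; simp
  linear_combination EW - hELa - α a * E1 - β a * E2
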